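/- Let α, β > 0. If λ ∈ ℂ is an eigenvalue of the iteration matrix Γ_{α,β} = M_{α,β}⁻¹ N_{α,β} (regarded as a complex matrix), then λ ≠ 1 and λ ≠ −1. -/

import Mathlib

open Matrix Complex

section helpers

variable {ι κ : Type*} [Fintype ι] [Fintype κ]

private lemma dot_sum_elim (v : ι ⊕ κ → ℝ) (p : ι → ℝ) (q : κ → ℝ) :
    v ⬝ᵥ Sum.elim p q = (v ∘ Sum.inl) ⬝ᵥ p + (v ∘ Sum.inr) ⬝ᵥ q := by
  simp [dotProduct, Fintype.sum_sum_type]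

private lemma re_star_dot (P : Matrix ι ι ℝ) (z : ι → ℂ) :
    (star z ⬝ᵥ ((P.map Complex.ofReal) *ᵥ z)).re
      = (fun i => (z i).re) ⬝ᵥ (P *ᵥ fun i => (z i).re)
        + (fun i => (z i).im) ⬝ᵥ (P *ᵥ fun i => (z i).im) := by
  simp only [dotProduct, mulVec, Complex.re_sum, Matrix.map_apply, Pi.star_apply]
  rw [← Finset.sum_add_distrib]
  refine Finset.sum_congr rfl fun i _ => ?_
  rw [Finset.mul_sum, Complex.re_sum, Finset.mul_sum, Finset.mul_sum, ← Finset.sum_add_distrib]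
  refine Finset.sum_congr rfl fun k _ => ?_
  simp [Complex.mul_re, RCLike.star_def, Complex.mul_im]

private lemma re_cross (P : Matrix ι κ ℝ) (x : κ → ℂ) (y : ι → ℂ) :
    (star x ⬝ᵥ ((Pᵀ.map Complex.ofReal) *ᵥ y)).re
      = (star y ⬝ᵥ ((P.map Complex.ofReal) *ᵥ x)).re := by
  simp only [dotProduct, mulVec, Matrix.map_apply, Pi.star_apply, Matrix.transpose_apply]
  simp only [Finset.mul_sum, Complex.re_sum]
  rw [Finset.sum_comm]
  refine Finset.sum_congr rfl fun i _ => Finset.sum_congr rfl fun k _ => ?_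
  simp [Complex.mul_re, RCLike.star_def]
  ring

private lemma mulVec_map_re (P : Matrix ι κ ℝ) (z : κ → ℂ) :
    (fun j => (((P.map Complex.ofReal) *ᵥ z) j).re) = P *ᵥ (fun k => (z k).re) := by
  funext j
  simp only [mulVec, dotProduct, Complex.re_sum, Matrix.map_apply]
  exact Finset.sum_congr rfl fun k _ => by simp [Complex.mul_re]

private lemma mulVec_map_im (P : Matrix ι κ ℝ) (z : κ → ℂ) :
    (fun j => (((P.map Complex.ofReal) *ᵥ z) j).im) = P *ᵥ (fun k => (z k).im) := by
  funext j
  simp only [mulVec, dotProduct, Complex.im_sum, Matrix.map_apply]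
  exact Finset.sum_congr rfl fun k _ => by simp [Complex.mul_im]

private lemma dot_self_pos {v : ι → ℝ} (hv : v ≠ 0) : 0 < v ⬝ᵥ v := by
  rcases lt_or_eq_of_le (Finset.sum_nonneg (fun i _ => mul_self_nonneg (v i)) :
      (0:ℝ) ≤ v ⬝ᵥ v) with h | h
  · exact h
  · exact absurd ((dotProduct_self_eq_zero).mp h.symm) hv

end helpers

private lemma ker_transpose_trivial {n m : ℕ} (B : Matrix (Fin m) (Fin n) ℝ)
    (hB : B.rank = m) (w : Fin m → ℝ) (hw : Bᵀ *ᵥ w = 0) : w = 0 := by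
  have hrk : Bᵀ.rank = m := by rw [Matrix.rank_transpose]; exact hB
  have h1 := LinearMap.finrank_range_add_finrank_ker (Bᵀ.mulVecLin)
  rw [show Module.finrank ℝ (LinearMap.range Bᵀ.mulVecLin) = Bᵀ.rank from rfl, hrk] at h1
  simp only [Module.finrank_pi, Fintype.card_fin] at h1
  have h2 : Module.finrank ℝ (LinearMap.ker Bᵀ.mulVecLin) = 0 := by omega
  have hker : LinearMap.ker Bᵀ.mulVecLin = ⊥ := Submodule.finrank_eq_zero.mp h2
  have hmem : w ∈ LinearMap.ker Bᵀ.mulVecLin := by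
    simp only [LinearMap.mem_ker, Matrix.mulVecLin_apply]; exact hw
  rw [hker] at hmem
  simpa using hmem

theorem eigenvalue_of_iteration_matrix_ne_one_neg_one
    (n m : ℕ) (hn : 0 < n) (hm : 0 < m) (hmn : m ≤ n)
    (A : Matrix (Fin n) (Fin n) ℝ) (B : Matrix (Fin m) (Fin n) ℝ)
    (C : Matrix (Fin m) (Fin m) ℝ)
    (hA : A.PosDef) (hC : C.PosSemidef) (hB : B.rank = m)
    (α β : ℝ) (hα : 0 < α) (hβ : 0 < β)
    (M N : Matrix (Fin n ⊕ Fin m) (Fin n ⊕ Fin m) ℝ)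
    (hM : M = (1/2 : ℝ) • Matrix.fromBlocks
      (α • (1 : Matrix (Fin n) (Fin n) ℝ) + A) Bᵀ (-B)
      (β • (1 : Matrix (Fin m) (Fin m) ℝ) + C))
    (hN : N = (1/2 : ℝ) • Matrix.fromBlocks
      (α • (1 : Matrix (Fin n) (Fin n) ℝ) - A) (-Bᵀ) B
      (β • (1 : Matrix (Fin m) (Fin m) ℝ) - C))
    (lam : ℂ) (u : Fin n ⊕ Fin m → ℂ) (hu : u ≠ 0)
    (heig : ((M⁻¹ * N).map Complex.ofReal) *ᵥ u = lam • u) :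
    lam ≠ 1 ∧ lam ≠ -1 := by
  -- Step 1: M has nonzero determinant
  have hApsd : ∀ x : Fin n → ℝ, 0 ≤ x ⬝ᵥ (A *ᵥ x) := fun x => by
    simpa using hA.posSemidef.dotProduct_mulVec_nonneg x
  have hCpsd : ∀ y : Fin m → ℝ, 0 ≤ y ⬝ᵥ (C *ᵥ y) := fun y => by
    simpa using hC.dotProduct_mulVec_nonneg y
  have hdetM : M.det ≠ 0 := by
    intro hdet
    obtain ⟨v, hv0, hv⟩ := (Matrix.exists_mulVec_eq_zero_iff).mpr hdet
    set x : Fin n → ℝ := v ∘ Sum.inl with hx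
    set y : Fin m → ℝ := v ∘ Sum.inr with hy
    have hquad : v ⬝ᵥ (M *ᵥ v) = 0 := by rw [hv, dotProduct_zero]
    have hcross : x ⬝ᵥ (Bᵀ *ᵥ y) = y ⬝ᵥ (B *ᵥ x) := by
      rw [Matrix.dotProduct_mulVec, Matrix.vecMul_transpose, dotProduct_comm]
    have hval : v ⬝ᵥ (M *ᵥ v)
        = (1/2) * (α * (x ⬝ᵥ x) + x ⬝ᵥ (A *ᵥ x) + (β * (y ⬝ᵥ y) + y ⬝ᵥ (C *ᵥ y))) := by
      rw [hM, smul_mulVec, fromBlocks_mulVec, dotProduct_smul, dot_sum_elim]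
      simp only [add_mulVec, smul_mulVec, one_mulVec, dotProduct_add, dotProduct_smul,
        neg_mulVec, dotProduct_neg, smul_eq_mul]
      rw [hcross]
      ring_nf
      rw [← hx, ← hy]
      ring
    have hxy : x ≠ 0 ∨ y ≠ 0 := by
      by_contra h
      push_neg at h
      apply hv0
      funext i
      rcases i with i | i
      · exact congrFun h.1 i
      · exact congrFun h.2 i
    have hxx : (0:ℝ) ≤ x ⬝ᵥ x := Finset.sum_nonneg fun i _ => mul_self_nonneg _
    have hyy : (0:ℝ) ≤ y ⬝ᵥ y := Finset.sum_nonneg fun i _ => mul_self_nonneg _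
    have hpos : 0 < α * (x ⬝ᵥ x) + x ⬝ᵥ (A *ᵥ x) + (β * (y ⬝ᵥ y) + y ⬝ᵥ (C *ᵥ y)) := by
      rcases hxy with hx0 | hy0
      · have := mul_pos hα (dot_self_pos hx0)
        have := hApsd x; have := hCpsd y
        nlinarith [mul_nonneg hβ.le hyy]
      · have := mul_pos hβ (dot_self_pos hy0)
        have := hApsd x; have := hCpsd y
        nlinarith [mul_nonneg hα.le hxx]
    rw [hval] at hquad
    linarith
    -- Step 2: key eigen relation
  have hdet : IsUnit M.det := isUnit_iff_ne_zero.mpr hdetM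
  have hMinvN : M * (M⁻¹ * N) = N := by
    rw [← Matrix.mul_assoc, Matrix.mul_nonsing_inv _ hdet, Matrix.one_mul]
  have hmapmul : ∀ (P Q : Matrix (Fin n ⊕ Fin m) (Fin n ⊕ Fin m) ℝ),
      ((P * Q).map Complex.ofReal) = P.map Complex.ofReal * Q.map Complex.ofReal :=
    fun P Q => Matrix.map_mul (f := Complex.ofRealHom)
  have key : (N.map Complex.ofReal) *ᵥ u = lam • ((M.map Complex.ofReal) *ᵥ u) := by
    have h1 : (N.map Complex.ofReal) *ᵥ u
        = (M.map Complex.ofReal) *ᵥ (((M⁻¹ * N).map Complex.ofReal) *ᵥ u) := by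
      rw [mulVec_mulVec, ← hmapmul, hMinvN]
    rw [h1, heig, mulVec_smul]
  -- Step 3: block identities
  have hsub : M - N = fromBlocks A Bᵀ (-B) C := by
    subst hM; subst hN
    ext i j
    rcases i with i | i <;> rcases j with j | j <;>
      simp [Matrix.sub_apply, Matrix.smul_apply, Matrix.add_apply, Matrix.one_apply,
        Matrix.neg_apply, Matrix.transpose_apply, Matrix.fromBlocks] <;> ring_nf <;>
      simp [Matrix.one_apply, apply_ite] <;> ring
  have hadd : M + N = fromBlocks (α • (1 : Matrix (Fin n) (Fin n) ℝ)) 0 0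
      (β • (1 : Matrix (Fin m) (Fin m) ℝ)) := by
    subst hM; subst hN
    ext i j
    rcases i with i | i <;> rcases j with j | j <;>
      simp [Matrix.add_apply, Matrix.smul_apply, Matrix.sub_apply, Matrix.one_apply,
        Matrix.neg_apply, Matrix.transpose_apply, Matrix.fromBlocks, apply_ite] <;>
      split_ifs <;> ring
  constructor
  · -- lam ≠ 1
    intro h1
    subst h1
    rw [one_smul] at key
    have hz : ((fromBlocks A Bᵀ (-B) C).map Complex.ofReal) *ᵥ u = 0 := by
      rw [← hsub]
      have hms : (M - N).map Complex.ofReal = M.map Complex.ofReal - N.map Complex.ofReal := by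
        ext i j; simp
      rw [hms, sub_mulVec, key, sub_self]
    rw [Matrix.fromBlocks_map, fromBlocks_mulVec] at hz
    set x : Fin n → ℂ := u ∘ Sum.inl with hxdef
    set y : Fin m → ℂ := u ∘ Sum.inr with hydef
    have eq1 : A.map Complex.ofReal *ᵥ x + Bᵀ.map Complex.ofReal *ᵥ y = 0 := by
      funext i; exact congrFun hz (Sum.inl i)
    have eq2 : (-B).map Complex.ofReal *ᵥ x + C.map Complex.ofReal *ᵥ y = 0 := by
      funext i; exact congrFun hz (Sum.inr i)
    have hnegmap : ((-B).map Complex.ofReal) = -(B.map Complex.ofReal) := by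
      ext i j; simp
    have hAB : A.map Complex.ofReal *ᵥ x = -(Bᵀ.map Complex.ofReal *ᵥ y) :=
      eq_neg_of_add_eq_zero_left eq1
    have hCB : C.map Complex.ofReal *ᵥ y = B.map Complex.ofReal *ᵥ x := by
      rw [hnegmap, neg_mulVec] at eq2
      have := eq_neg_of_add_eq_zero_right eq2
      simpa using this
    have hre : (star x ⬝ᵥ (A.map Complex.ofReal *ᵥ x)).re
        + (star y ⬝ᵥ (C.map Complex.ofReal *ᵥ y)).re = 0 := by
      rw [hAB, hCB, dotProduct_neg, Complex.neg_re, re_cross B x y]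
      ring
    rw [re_star_dot A x, re_star_dot C y] at hre
    have h3 := hCpsd (fun i => (y i).re)
    have h4 := hCpsd (fun i => (y i).im)
    have h1 := hApsd (fun i => (x i).re)
    have h2 := hApsd (fun i => (x i).im)
    have hx0 : x = 0 := by
      by_contra hx
      have hab : (fun i => (x i).re) ≠ 0 ∨ (fun i => (x i).im) ≠ 0 := by
        by_contra h
        push_neg at h
        apply hx
        funext i
        exact Complex.ext (congrFun h.1 i) (congrFun h.2 i)
      rcases hab with h | h
      · have h5 : 0 < (fun i => (x i).re) ⬝ᵥ (A *ᵥ fun i => (x i).re) := by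
          simpa using hA.dotProduct_mulVec_pos h
        linarith
      · have h5 : 0 < (fun i => (x i).im) ⬝ᵥ (A *ᵥ fun i => (x i).im) := by
          simpa using hA.dotProduct_mulVec_pos h
        linarith
    have hBty : Bᵀ.map Complex.ofReal *ᵥ y = 0 := by
      rw [hx0] at eq1
      simpa using eq1
    have h6 : Bᵀ *ᵥ (fun k => (y k).re) = 0 := by
      rw [← mulVec_map_re Bᵀ y, hBty]
      funext j; simp
    have h7 : Bᵀ *ᵥ (fun k => (y k).im) = 0 := by
      rw [← mulVec_map_im Bᵀ y, hBty]
      funext j; simp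
    have hyre := ker_transpose_trivial B hB _ h6
    have hyim := ker_transpose_trivial B hB _ h7
    apply hu
    funext i
    rcases i with i | i
    · exact congrFun hx0 i
    · exact Complex.ext (congrFun hyre i) (congrFun hyim i)
  · -- lam ≠ -1
    intro h1
    subst h1
    have hz : ((M + N).map Complex.ofReal) *ᵥ u = 0 := by
      have hma : (M + N).map Complex.ofReal = M.map Complex.ofReal + N.map Complex.ofReal := by
        ext i j; simp
      rw [hma, add_mulVec, key, neg_smul, one_smul, add_neg_cancel]
    rw [hadd, Matrix.fromBlocks_map, fromBlocks_mulVec] at hz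
    have hsmα : ((α • (1 : Matrix (Fin n) (Fin n) ℝ)).map Complex.ofReal)
        = (α : ℂ) • (1 : Matrix (Fin n) (Fin n) ℂ) := by
      ext i j; by_cases h : i = j <;> simp [Matrix.one_apply, h]
    have hsmβ : ((β • (1 : Matrix (Fin m) (Fin m) ℝ)).map Complex.ofReal)
        = (β : ℂ) • (1 : Matrix (Fin m) (Fin m) ℂ) := by
      ext i j; by_cases h : i = j <;> simp [Matrix.one_apply, h]
    have hz0 : ((0 : Matrix (Fin n) (Fin m) ℝ).map Complex.ofReal) = 0 := by ext i j; simp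
    have hz0' : ((0 : Matrix (Fin m) (Fin n) ℝ).map Complex.ofReal) = 0 := by ext i j; simp
    rw [hsmα, hsmβ, hz0, hz0'] at hz
    apply hu
    funext i
    rcases i with i | i
    · have e1 : ((α : ℂ) • (1 : Matrix (Fin n) (Fin n) ℂ)) *ᵥ (u ∘ Sum.inl)
          + (0 : Matrix (Fin n) (Fin m) ℂ) *ᵥ (u ∘ Sum.inr) = 0 := by
        funext k; exact congrFun hz (Sum.inl k)
      rw [smul_mulVec, one_mulVec, zero_mulVec, add_zero] at e1
      have := congrFun e1 i
      simp only [Pi.smul_apply, smul_eq_mul, Pi.zero_apply] at this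
      have hαc : (α : ℂ) ≠ 0 := Complex.ofReal_ne_zero.mpr hα.ne'
      exact (mul_eq_zero.mp this).resolve_left hαc
    · have e2 : (0 : Matrix (Fin m) (Fin n) ℂ) *ᵥ (u ∘ Sum.inl)
          + ((β : ℂ) • (1 : Matrix (Fin m) (Fin m) ℂ)) *ᵥ (u ∘ Sum.inr) = 0 := by
        funext k; exact congrFun hz (Sum.inr k)
      rw [smul_mulVec, one_mulVec, zero_mulVec, zero_add] at e2
      have := congrFun e2 i
      simp only [Pi.smul_apply, smul_eq_mul, Pi.zero_apply] at this
      have hβc : (β : ℂ) ≠ 0 := Complex.ofReal_ne_zero.mpr hβ.ne'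
      exact (mul_eq_zero.mp this).resolve_left hβc
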